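/- Let H = -Δ + V on ℓ²(Z^d) with V bounded and Γ ⊊ Z^d. Then E_Γ(H) > E_∅(H) if and only if E_Γ(H,t) > E_∅(H) for all t > 0. -/

import Mathlib

open scoped BigOperators

noncomputable section

/-- `ℤ^d`. -/
abbrev Zd (d : ℕ) := Fin d → ℤ

/-- `ℓ¹` distance on `ℤ^d`. -/
def dist1 {d : ℕ} (x y : Zd d) : ℕ := ∑ i, (x i - y i).natAbs

/-- the `i`-th coordinate unit vector. -/
def unitVec {d : ℕ} (i : Fin d) : Zd d := fun j => if j = i then 1 else 0

/-- the negative discrete Laplacian: `(-Δφ)(x) = Σ_{‖x-y‖₁=1} (φ(x) - φ(y))`. -/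
def negLap {d : ℕ} (φ : Zd d → ℝ) (x : Zd d) : ℝ :=
  ∑ i, ((φ x - φ (x + unitVec i)) + (φ x - φ (x - unitVec i)))

/-- characteristic function of a set. -/
def chi {d : ℕ} (A : Set (Zd d)) : Zd d → ℝ := A.indicator fun _ => 1

/-- edge boundary `∂A = {(x,y) ∈ A × Aᶜ : ‖x-y‖₁ = 1}`. -/
def bdry {d : ℕ} (A : Set (Zd d)) : Set (Zd d × Zd d) :=
  {p | p.1 ∈ A ∧ p.2 ∉ A ∧ dist1 p.1 p.2 = 1}

/-- squared `ℓ²` norm (for finitely supported functions). -/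
def norm2 {d : ℕ} (φ : Zd d → ℝ) : ℝ := ∑ᶠ x, φ x ^ 2

/-- quadratic form `⟨φ, (-Δ + V)φ⟩` (for finitely supported `φ`). -/
def energy {d : ℕ} (V : Zd d → ℝ) (φ : Zd d → ℝ) : ℝ :=
  ∑ᶠ x, φ x * (negLap φ x + V x * φ x)

/-- `V` is a bounded potential. -/
def BddPot {d : ℕ} (V : Zd d → ℝ) : Prop := ∃ C, ∀ x, |V x| ≤ C

/-- the spread `spr(V) = sup V - inf V` of a bounded potential. -/
def spr {d : ℕ} (V : Zd d → ℝ) : ℝ := sSup (Set.range V) - sInf (Set.range V)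

/-- `E_∅(H) = inf σ(-Δ + V)`, characterized variationally over normalized finitely
supported functions. -/
def E0 {d : ℕ} (V : Zd d → ℝ) : ℝ :=
  sInf {r | ∃ φ : Zd d → ℝ, (Function.support φ).Finite ∧ norm2 φ = 1 ∧ r = energy V φ}

/-- `E_Γ(H) = inf σ(H_Γ)`, the ground state energy of the `Γ`-trimmed operator,
characterized variationally over normalized finitely supported functions vanishing on `Γ`. -/
def EG {d : ℕ} (V : Zd d → ℝ) (Γ : Set (Zd d)) : ℝ :=
  sInf {r | ∃ φ : Zd d → ℝ, (Function.support φ).Finite ∧ (∀ x ∈ Γ, φ x = 0) ∧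
    norm2 φ = 1 ∧ r = energy V φ}

/-- `E_Γ(H,t) = inf σ(H + t χ_Γ)`. -/
def EGt {d : ℕ} (V : Zd d → ℝ) (Γ : Set (Zd d)) (t : ℝ) : ℝ :=
  E0 fun x => V x + t * chi Γ x

/-- the open box `Λ⁰_K(ζ) = {y : ‖y-ζ‖_∞ < K/2}`. -/
def Lam0 {d : ℕ} (K : ℕ) (ζ : Zd d) : Set (Zd d) := {y | ∀ i, 2 * (y i - ζ i).natAbs < K}

/-- `Γ` is `(K,Q)`-relatively dense: `|Γ ∩ Λ⁰_K(ζ)| ≥ Q` for all `ζ ∈ KZ^d`. -/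
def RelDense {d : ℕ} (Γ : Set (Zd d)) (K Q : ℕ) : Prop :=
  ∀ z : Zd d, Q ≤ (Γ ∩ Lam0 K fun i => (K : ℤ) * z i).ncard

/-- `K_* = K` if `K` is odd, `K+1` if `K` is even. -/
def Kstar (K : ℕ) : ℕ := if K % 2 = 1 then K else K + 1

/-- `⟨χ_A, (-Δ)χ_A⟩` for a finite set `A`; for `A ⊆ Γᶜ` this coincides with
`⟨χ_A, (-Δ_Γ)χ_A⟩` for the `Γ`-trimmed Laplacian. -/
def qform {d : ℕ} (A : Finset (Zd d)) : ℝ := ∑ x ∈ A, negLap (chi ↑A) x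

/-- Cheeger constant `β(Γ)` of the `Γ`-trimmed Laplacian. -/
def betaG {d : ℕ} (Γ : Set (Zd d)) : ℝ :=
  sInf {r | ∃ A : Finset (Zd d), A.Nonempty ∧ (↑A : Set (Zd d)) ⊆ Γᶜ ∧
    r = qform A / A.card}

/-- `⟨χ_A, H(t)χ_A⟩ = ⟨χ_A, (-Δ)χ_A⟩ + t|A ∩ Γ|` for a finite set `A`. -/
def qformT {d : ℕ} (Γ : Set (Zd d)) (t : ℝ) (A : Finset (Zd d)) : ℝ :=
  qform A + t * ((↑A ∩ Γ : Set (Zd d)).ncard)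

/-- Cheeger constant `β(t)` of `H(t) = -Δ + t χ_Γ`. -/
def betaT {d : ℕ} (Γ : Set (Zd d)) (t : ℝ) : ℝ :=
  sInf {r | ∃ A : Finset (Zd d), A.Nonempty ∧ r = qformT Γ t A / A.card}

/-- the box `Λ_L(x₀) = {y : ‖y-x₀‖_∞ ≤ L/2}`. -/
def box {d : ℕ} (L : ℕ) (x₀ : Zd d) : Set (Zd d) := {y | ∀ i, 2 * (y i - x₀ i).natAbs ≤ L}

/-- `φ` is an eigenfunction of `H_Λ = (-Δ + V)_Λ` with eigenvalue `E`. -/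
def eigOn {d : ℕ} (V : Zd d → ℝ) (Λ : Set (Zd d)) (φ : Zd d → ℝ) (E : ℝ) : Prop :=
  (∀ x ∉ Λ, φ x = 0) ∧ ∀ x ∈ Λ, negLap φ x + V x * φ x = E * φ x

/-- `E^Λ = inf σ(H_Λ)`, variationally. -/
def Ebox {d : ℕ} (V : Zd d → ℝ) (Λ : Set (Zd d)) : ℝ :=
  sInf {r | ∃ φ : Zd d → ℝ, (∀ x ∉ Λ, φ x = 0) ∧ norm2 φ = 1 ∧ r = energy V φ}

namespace Stmt9
variable {d : ℕ}
open Function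

lemma supp_le {φ F : Zd d → ℝ} (hφ : (support φ).Finite) (h : ∀ x, φ x = 0 → F x = 0) :
    (support F).Finite :=
  hφ.subset fun x hx => by
    simp only [mem_support] at hx ⊢
    exact fun hc => hx (h x hc)

lemma support_shift_finite {φ : Zd d → ℝ} (hφ : (support φ).Finite) (v : Zd d) :
    (support fun x => φ (x + v)).Finite := by
  have : (support fun x => φ (x + v)) = (Equiv.addRight v) ⁻¹' (support φ) := by
    ext x; simp [Function.support]
  rw [this]
  exact hφ.preimage (Equiv.injective _).injOn

lemma finsum_shift (g : Zd d → ℝ) (v : Zd d) : ∑ᶠ x, g (x + v) = ∑ᶠ x, g x :=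
  finsum_comp_equiv (Equiv.addRight v)

lemma finsum_mono {f g : Zd d → ℝ} (hf : (support f).Finite) (hg : (support g).Finite)
    (h : ∀ x, f x ≤ g x) : ∑ᶠ x, f x ≤ ∑ᶠ x, g x := by
  classical
  set T := hf.toFinset ∪ hg.toFinset with hT
  rw [finsum_eq_finset_sum_of_support_subset f (s := T) (by intro x hx; simp [hT, hf.mem_toFinset, hx]),
    finsum_eq_finset_sum_of_support_subset g (s := T) (by intro x hx; simp [hT, hg.mem_toFinset, hx])]
  exact Finset.sum_le_sum fun x _ => h x

lemma finsum_fin_comm (h : Fin d → Zd d → ℝ) (hh : ∀ i, (support (h i)).Finite) :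
    ∑ᶠ x, ∑ i, h i x = ∑ i, ∑ᶠ x, h i x := by
  classical
  set T : Finset (Zd d) := Finset.univ.biUnion fun i => (hh i).toFinset with hT
  have hsub : ∀ i : Fin d, support (h i) ⊆ (T : Set (Zd d)) := by
    intro i x hx
    simp only [hT, Finset.coe_biUnion, Finset.mem_coe, Finset.mem_univ, Set.mem_iUnion]
    exact ⟨i, by simp, by simp [(hh i).mem_toFinset, hx]⟩
  have houter : support (fun x => ∑ i, h i x) ⊆ (T : Set (Zd d)) := by
    intro x hx
    simp only [mem_support] at hx
    obtain ⟨i, hi⟩ : ∃ i, h i x ≠ 0 := by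
      by_contra hz; push_neg at hz
      exact hx (Finset.sum_eq_zero fun i _ => hz i)
    exact hsub i hi
  rw [finsum_eq_finset_sum_of_support_subset _ houter, Finset.sum_comm]
  exact Finset.sum_congr rfl fun i _ =>
    (finsum_eq_finset_sum_of_support_subset _ (hsub i)).symm

lemma supp_diff {φ : Zd d → ℝ} (hφ : (support φ).Finite) (v : Zd d) :
    (support fun x => (φ x - φ (x + v)) ^ 2).Finite := by
  apply Set.Finite.subset (hφ.union (support_shift_finite hφ v))
  intro x hx
  simp only [mem_support, Set.mem_union] at hx ⊢
  by_contra hc; push_neg at hc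
  simp [hc.1, hc.2] at hx

def dir (φ : Zd d → ℝ) : ℝ := ∑ i : Fin d, ∑ᶠ x, (φ x - φ (x + unitVec i)) ^ 2

lemma dir_nonneg (φ : Zd d → ℝ) : 0 ≤ dir φ :=
  Finset.sum_nonneg fun _ _ => finsum_nonneg fun _ => sq_nonneg _

lemma sum_negLap (φ : Zd d → ℝ) (hφ : (support φ).Finite) :
    ∑ᶠ x, φ x * negLap φ x = dir φ := by
  have h1 : ∀ x, φ x * negLap φ x =
      ∑ i, (φ x * (φ x - φ (x + unitVec i)) + φ x * (φ x - φ (x - unitVec i))) := by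
    intro x
    rw [negLap, Finset.mul_sum]
    exact Finset.sum_congr rfl fun i _ => by ring
  calc ∑ᶠ x, φ x * negLap φ x
      = ∑ i, ∑ᶠ x, (φ x * (φ x - φ (x + unitVec i)) + φ x * (φ x - φ (x - unitVec i))) := by
        rw [← finsum_fin_comm]
        · exact finsum_congr h1
        · intro i
          exact supp_le hφ fun x hc => by simp [hc]
    _ = dir φ := by
        refine Finset.sum_congr rfl fun i _ => ?_
        have hs1 : (support fun x => φ x * (φ x - φ (x + unitVec i))).Finite :=
          supp_le hφ fun x hc => by simp [hc]
        have hs2 : (support fun x => φ x * (φ x - φ (x - unitVec i))).Finite :=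
          supp_le hφ fun x hc => by simp [hc]
        rw [finsum_add_distrib hs1 hs2]
        have h2 : ∑ᶠ x, φ x * (φ x - φ (x - unitVec i)) =
            ∑ᶠ x, φ (x + unitVec i) * (φ (x + unitVec i) - φ x) := by
          rw [← finsum_shift (fun x => φ x * (φ x - φ (x - unitVec i))) (unitVec i)]
          exact finsum_congr fun x => by simp
        rw [h2]
        have hs3 : (support fun x => φ (x + unitVec i) * (φ (x + unitVec i) - φ x)).Finite :=
          supp_le (support_shift_finite hφ (unitVec i)) fun x hc => by simp [hc]
        rw [← finsum_add_distrib hs1 hs3]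
        exact finsum_congr fun x => by ring

lemma norm2_nonneg (φ : Zd d → ℝ) : 0 ≤ norm2 φ := finsum_nonneg fun _ => sq_nonneg _

lemma dir_le (φ : Zd d → ℝ) (hφ : (support φ).Finite) : dir φ ≤ 4 * d * norm2 φ := by
  have key : ∀ i : Fin d, ∑ᶠ x, (φ x - φ (x + unitVec i)) ^ 2 ≤ 4 * norm2 φ := by
    intro i
    have h1 : ∑ᶠ x, (φ x - φ (x + unitVec i)) ^ 2 ≤
        ∑ᶠ x, (2 * φ x ^ 2 + 2 * φ (x + unitVec i) ^ 2) := by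
      apply finsum_mono (supp_diff hφ _)
      · apply Set.Finite.subset (hφ.union (support_shift_finite hφ (unitVec i)))
        intro x hx
        simp only [mem_support, Set.mem_union] at hx ⊢
        by_contra hc; push_neg at hc
        simp [hc.1, hc.2] at hx
      · intro x; nlinarith [sq_nonneg (φ x + φ (x + unitVec i))]
    have hs1 : (support fun x => 2 * φ x ^ 2).Finite :=
      supp_le hφ fun x hc => by simp [hc]
    have hs2 : (support fun x => 2 * φ (x + unitVec i) ^ 2).Finite :=
      supp_le (support_shift_finite hφ (unitVec i)) fun x hc => by simp [hc]
    rw [finsum_add_distrib hs1 hs2] at h1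
    have e1 : ∑ᶠ x, 2 * φ x ^ 2 = 2 * norm2 φ := by
      rw [norm2, ← mul_finsum _ _]
    have e2 : ∑ᶠ x, 2 * φ (x + unitVec i) ^ 2 = 2 * norm2 φ := by
      rw [show (fun x => 2 * φ (x + unitVec i) ^ 2) =
        fun x => (fun y => 2 * φ y ^ 2) (x + unitVec i) from rfl,
        finsum_shift (fun y => 2 * φ y ^ 2) (unitVec i)]
      rw [norm2, ← mul_finsum _ _]
    rw [e1, e2] at h1; linarith
  calc dir φ ≤ ∑ _i : Fin d, 4 * norm2 φ := Finset.sum_le_sum fun i _ => key i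
    _ = 4 * d * norm2 φ := by simp [Finset.sum_const]; ring

/-! potential part of the quadratic form -/

def pot (W φ : Zd d → ℝ) : ℝ := ∑ᶠ x, W x * φ x ^ 2

lemma energy_decomp (W φ : Zd d → ℝ) (hφ : (support φ).Finite) :
    energy W φ = dir φ + pot W φ := by
  rw [energy, ← sum_negLap φ hφ, pot,
    ← finsum_add_distrib (supp_le hφ fun x hc => by simp [hc])
      (supp_le hφ fun x hc => by simp [hc])]
  exact finsum_congr fun x => by ring

lemma pot_le {W φ : Zd d → ℝ} {C : ℝ} (hC : ∀ x, |W x| ≤ C) (hφ : (support φ).Finite) :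
    |pot W φ| ≤ C * norm2 φ := by
  rw [abs_le]
  constructor
  · have h := finsum_mono (f := fun x => (-C) * φ x ^ 2) (g := fun x => W x * φ x ^ 2)
      (supp_le hφ fun x hc => by simp [hc]) (supp_le hφ fun x hc => by simp [hc])
      (fun x => mul_le_mul_of_nonneg_right (neg_le_of_abs_le (hC x)) (sq_nonneg _))
    rw [← mul_finsum _ _] at h
    rw [pot, norm2]; linarith
  · have h := finsum_mono (f := fun x => W x * φ x ^ 2) (g := fun x => C * φ x ^ 2)
      (supp_le hφ fun x hc => by simp [hc]) (supp_le hφ fun x hc => by simp [hc])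
      (fun x => mul_le_mul_of_nonneg_right (le_of_abs_le (hC x)) (sq_nonneg _))
    rw [← mul_finsum _ _] at h
    rw [pot, norm2]; linarith

lemma pot_add (V U φ : Zd d → ℝ) (hφ : (support φ).Finite) :
    pot (fun x => V x + U x) φ = pot V φ + pot U φ := by
  rw [pot, pot, pot,
    ← finsum_add_distrib (supp_le hφ fun x hc => by simp [hc])
      (supp_le hφ fun x hc => by simp [hc])]
  exact finsum_congr fun x => by ring

lemma pot_smul (U φ : Zd d → ℝ) (t : ℝ) (hφ : (support φ).Finite) :
    pot (fun x => t * U x) φ = t * pot U φ := by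
  rw [pot, pot, mul_finsum (fun x => U x * φ x ^ 2) t]
  exact finsum_congr fun x => by ring

lemma energy_add (V U φ : Zd d → ℝ) (hφ : (support φ).Finite) :
    energy (fun x => V x + U x) φ = energy V φ + pot U φ := by
  rw [energy_decomp _ _ hφ, energy_decomp _ _ hφ, pot_add V U φ hφ]; ring

lemma energy_smul (W φ : Zd d → ℝ) (r : ℝ) (hφ : (support φ).Finite) :
    energy W (fun x => r * φ x) = r ^ 2 * energy W φ := by
  rw [energy, energy, mul_finsum (fun x => φ x * (negLap φ x + W x * φ x)) (r ^ 2)]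
  apply finsum_congr; intro x
  have hnl : negLap (fun y => r * φ y) x = r * negLap φ x := by
    rw [negLap, negLap, Finset.mul_sum]
    exact Finset.sum_congr rfl fun i _ => by ring
  rw [hnl]; ring

lemma norm2_smul (φ : Zd d → ℝ) (r : ℝ) (hφ : (support φ).Finite) :
    norm2 (fun x => r * φ x) = r ^ 2 * norm2 φ := by
  rw [norm2, norm2, mul_finsum (fun x => φ x ^ 2) (r ^ 2)]
  exact finsum_congr fun x => by ring

/-! chi facts -/

lemma chi_mem {Γ : Set (Zd d)} {x : Zd d} (h : x ∈ Γ) : chi Γ x = 1 :=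
  Set.indicator_of_mem h _

lemma chi_not_mem {Γ : Set (Zd d)} {x : Zd d} (h : x ∉ Γ) : chi Γ x = 0 :=
  Set.indicator_of_notMem h _

lemma chi_nonneg (Γ : Set (Zd d)) (x : Zd d) : 0 ≤ chi Γ x := by
  by_cases h : x ∈ Γ
  · rw [chi_mem h]; norm_num
  · rw [chi_not_mem h]

lemma chi_le_one (Γ : Set (Zd d)) (x : Zd d) : chi Γ x ≤ 1 := by
  by_cases h : x ∈ Γ
  · rw [chi_mem h]
  · rw [chi_not_mem h]; norm_num

/-! variational sets -/

def ESet (W : Zd d → ℝ) : Set ℝ :=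
  {r | ∃ φ : Zd d → ℝ, (Function.support φ).Finite ∧ norm2 φ = 1 ∧ r = energy W φ}

lemma E0_eq (W : Zd d → ℝ) : E0 W = sInf (ESet W) := rfl

lemma ESet_lb {W : Zd d → ℝ} {C : ℝ} (hC : ∀ x, |W x| ≤ C) :
    ∀ r ∈ ESet W, -C ≤ r := by
  rintro r ⟨φ, hφ, hn, rfl⟩
  have h1 := pot_le hC hφ
  rw [hn, mul_one, abs_le] at h1
  rw [energy_decomp _ _ hφ]
  linarith [dir_nonneg φ]

lemma ESet_nonempty (W : Zd d → ℝ) : (ESet W).Nonempty := by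
  classical
  refine ⟨_, (fun x : Zd d => if x = 0 then (1 : ℝ) else 0), ?_, ?_, rfl⟩
  · apply Set.Finite.subset (Set.finite_singleton (0 : Zd d))
    intro x hx
    simp only [mem_support, ne_eq, ite_eq_right_iff, not_forall] at hx
    simp [hx.1]
  · rw [norm2, finsum_eq_single _ (0 : Zd d) (fun x hx => by simp [hx])]
    simp

lemma E0_le_energy {V : Zd d → ℝ} {C : ℝ} (hC : ∀ x, |V x| ≤ C) (φ : Zd d → ℝ)
    (hφ : (support φ).Finite) (hn : norm2 φ = 1) : E0 V ≤ energy V φ :=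
  csInf_le ⟨-C, ESet_lb hC⟩ ⟨φ, hφ, hn, rfl⟩

def EGSet (V : Zd d → ℝ) (Γ : Set (Zd d)) : Set ℝ :=
  {r | ∃ φ : Zd d → ℝ, (Function.support φ).Finite ∧ (∀ x ∈ Γ, φ x = 0) ∧
    norm2 φ = 1 ∧ r = energy V φ}

lemma EG_eq (V : Zd d → ℝ) (Γ : Set (Zd d)) : EG V Γ = sInf (EGSet V Γ) := rfl

lemma EGSet_subset (V : Zd d → ℝ) (Γ : Set (Zd d)) : EGSet V Γ ⊆ ESet V := by
  rintro r ⟨φ, h1, _, h3, h4⟩; exact ⟨φ, h1, h3, h4⟩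

lemma aux_sq {a b c : ℝ} (hc : 0 < c) : (a - b) ^ 2 ≤ (1 + c) * a ^ 2 + (1 + 1 / c) * b ^ 2 := by
  have h : 0 ≤ (c * a + b) ^ 2 / c := div_nonneg (sq_nonneg _) hc.le
  have h2 : (1 + c) * a ^ 2 + (1 + 1 / c) * b ^ 2 - (a - b) ^ 2 = (c * a + b) ^ 2 / c := by
    field_simp; ring
  linarith

end Stmt9

set_option maxHeartbeats 1000000 in
/-- `E_Γ(H) > E_∅(H)` iff `E_Γ(H,t) > E_∅(H)` for all `t > 0`. -/
theorem stmt9 (d : ℕ) (hd : 0 < d) (V : Zd d → ℝ) (hV : BddPot V)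
    (Γ : Set (Zd d)) (hne : Γ ≠ Set.univ) :
    E0 V < EG V Γ ↔ ∀ t : ℝ, 0 < t → E0 V < EGt V Γ t := by
  classical
  obtain ⟨C, hC⟩ := hV
  have hC0 : 0 ≤ C := le_trans (abs_nonneg _) (hC 0)
  constructor
  · -- hard direction
    intro hlt t ht
    by_contra hcon
    push_neg at hcon
    -- notation
    set G := EG V Γ with hGdef
    set E₀ := E0 V with hE₀def
    set g := G - E₀ with hgdef
    have hg : 0 < g := by simp only [hgdef]; linarith
    set M := |E₀| + C + g + 1 with hMdef
    have hM : 0 < M := by have := abs_nonneg E₀; simp only [hMdef]; linarith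
    set c := g / (2 * M) with hcdef
    have hc : 0 < c := by positivity
    have hcM : c * M = g / 2 := by
      rw [hcdef]; field_simp
    set K := (1 + 1 / c) * (4 * (d : ℝ)) + C + |G| with hKdef
    have hK : 0 ≤ K := by
      have h1 : (0:ℝ) ≤ (1 + 1 / c) * (4 * (d : ℝ)) := by positivity
      have h2 := abs_nonneg G
      simp only [hKdef]; linarith
    have hden : 0 < 1 + K / t := by
      have := div_nonneg hK ht.le; linarith
    set ε := min (min 1 (t / 2)) ((g / 4) / (1 + K / t)) with hεdef
    have hε : 0 < ε :=
      lt_min (lt_min one_pos (by linarith)) (div_pos (by linarith) hden)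
    have hε1 : ε ≤ 1 := le_trans (min_le_left _ _) (min_le_left _ _)
    have hεt : ε ≤ t / 2 := le_trans (min_le_left _ _) (min_le_right _ _)
    have hεg : ε * (1 + K / t) ≤ g / 4 := by
      have h := min_le_right (min 1 (t / 2)) ((g / 4) / (1 + K / t))
      calc ε * (1 + K / t) ≤ ((g / 4) / (1 + K / t)) * (1 + K / t) :=
            mul_le_mul_of_nonneg_right (min_le_right _ _) hden.le
        _ = g / 4 := div_mul_cancel₀ _ hden.ne'
    -- near-minimizer of `EGt`
    have hEGtdef : EGt V Γ t = sInf (Stmt9.ESet (fun x => V x + t * chi Γ x)) := rfl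
    obtain ⟨r, hrmem, hrlt⟩ :=
      Real.lt_sInf_add_pos (Stmt9.ESet_nonempty (fun x => V x + t * chi Γ x)) hε
    obtain ⟨φ, hφ, hn, rfl⟩ := hrmem
    have hφE : energy (fun x => V x + t * chi Γ x) φ < E₀ + ε := by
      rw [← hEGtdef] at hrlt; linarith
    -- decomposition φ = ψ + η
    set η := fun x => chi Γ x * φ x with hηdef
    set ψ := fun x => φ x - η x with hψdef
    have hηfin : (Function.support η).Finite :=
      Stmt9.supp_le hφ fun x hx => by simp [hηdef, hx]
    have hψfin : (Function.support ψ).Finite :=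
      Stmt9.supp_le hφ fun x hx => by simp [hψdef, hηdef, hx]
    have hψη : ∀ x, ψ x ^ 2 + η x ^ 2 = φ x ^ 2 := by
      intro x
      by_cases hx : x ∈ Γ
      · simp only [hψdef, hηdef, Stmt9.chi_mem hx]; ring
      · simp only [hψdef, hηdef, Stmt9.chi_not_mem hx]; ring
    have hψΓ : ∀ x ∈ Γ, ψ x = 0 := by
      intro x hx; simp [hψdef, hηdef, Stmt9.chi_mem hx]
    have hηx2 : ∀ x, η x ^ 2 = chi Γ x * φ x ^ 2 := by
      intro x
      by_cases hx : x ∈ Γ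
      · simp only [hηdef, Stmt9.chi_mem hx]; ring
      · simp only [hηdef, Stmt9.chi_not_mem hx]; ring
    set s := Stmt9.pot (chi Γ) φ with hsdef
    have hs0 : 0 ≤ s :=
      finsum_nonneg fun x => mul_nonneg (Stmt9.chi_nonneg Γ x) (sq_nonneg _)
    have hnη : norm2 η = s := by
      rw [norm2, hsdef, Stmt9.pot]; exact finsum_congr hηx2
    have hsplit : norm2 ψ + norm2 η = 1 := by
      rw [norm2, norm2,
        ← finsum_add_distrib (Stmt9.supp_le hψfin fun x hx => by simp [hx])
          (Stmt9.supp_le hηfin fun x hx => by simp [hx])]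
      rw [← hn, norm2]
      exact finsum_congr hψη
    have henW : energy (fun x => V x + t * chi Γ x) φ = energy V φ + t * s := by
      rw [Stmt9.energy_add V (fun x => t * chi Γ x) φ hφ,
        Stmt9.pot_smul (chi Γ) φ t hφ]
    have hE0φ : E₀ ≤ energy V φ := Stmt9.E0_le_energy hC φ hφ hn
    have hts : t * s < ε := by linarith
    have hst : s ≤ ε / t := by
      rw [le_div_iff₀ ht]
      have : s * t = t * s := by ring
      linarith
    have hεthalf : ε / t ≤ 1 / 2 := by
      rw [div_le_iff₀ ht]; linarith
    have hshalf : s ≤ 1 / 2 := le_trans hst hεthalf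
    set nψ := norm2 ψ with hnψdef
    have hnψ : nψ = 1 - s := by rw [hnψdef]; linarith
    have hnψpos : 0 < nψ := by rw [hnψ]; linarith
    -- energy bounds
    have hEVφ : energy V φ < E₀ + ε := by nlinarith [mul_nonneg ht.le hs0]
    have hdec : energy V φ = Stmt9.dir φ + Stmt9.pot V φ := Stmt9.energy_decomp V φ hφ
    have hpVφ : |Stmt9.pot V φ| ≤ C := by
      have := Stmt9.pot_le hC hφ; rwa [hn, mul_one] at this
    have hdφ : Stmt9.dir φ ≤ E₀ + ε + C := by
      have := (abs_le.1 hpVφ).1; linarith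
    have hdη : Stmt9.dir η ≤ 4 * (d : ℝ) * s := by
      have := Stmt9.dir_le η hηfin; rwa [hnη] at this
    -- Dirichlet comparison
    have hdψ : Stmt9.dir ψ ≤ (1 + c) * Stmt9.dir φ + (1 + 1 / c) * Stmt9.dir η := by
      have perI : ∀ i : Fin d,
          ∑ᶠ x, (ψ x - ψ (x + unitVec i)) ^ 2 ≤
            (1 + c) * ∑ᶠ x, (φ x - φ (x + unitVec i)) ^ 2 +
            (1 + 1 / c) * ∑ᶠ x, (η x - η (x + unitVec i)) ^ 2 := by
        intro i
        have hf1 : (Function.support fun x =>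
            (1 + c) * (φ x - φ (x + unitVec i)) ^ 2).Finite :=
          Stmt9.supp_le (Stmt9.supp_diff hφ (unitVec i)) fun x hx => by simp [hx]
        have hf2 : (Function.support fun x =>
            (1 + 1 / c) * (η x - η (x + unitVec i)) ^ 2).Finite :=
          Stmt9.supp_le (Stmt9.supp_diff hηfin (unitVec i)) fun x hx => by simp [hx]
        have step : ∑ᶠ x, (ψ x - ψ (x + unitVec i)) ^ 2 ≤
            ∑ᶠ x, ((1 + c) * (φ x - φ (x + unitVec i)) ^ 2 +
              (1 + 1 / c) * (η x - η (x + unitVec i)) ^ 2) := by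
          apply Stmt9.finsum_mono (Stmt9.supp_diff hψfin _)
          · apply Set.Finite.subset
              ((Stmt9.supp_diff hφ (unitVec i)).union (Stmt9.supp_diff hηfin (unitVec i)))
            intro x hx
            simp only [Function.mem_support, Set.mem_union] at hx ⊢
            by_contra hcc; push_neg at hcc
            simp [hcc.1, hcc.2] at hx
          · intro x
            have key : ψ x - ψ (x + unitVec i) =
                (φ x - φ (x + unitVec i)) - (η x - η (x + unitVec i)) := by
              simp only [hψdef]; ring
            rw [key]
            exact Stmt9.aux_sq hc
        rw [finsum_add_distrib hf1 hf2,
          ← mul_finsum (fun x => (φ x - φ (x + unitVec i)) ^ 2) (1 + c),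
          ← mul_finsum (fun x => (η x - η (x + unitVec i)) ^ 2) (1 + 1 / c)] at step
        exact step
      calc Stmt9.dir ψ ≤ ∑ i : Fin d,
            ((1 + c) * ∑ᶠ x, (φ x - φ (x + unitVec i)) ^ 2 +
             (1 + 1 / c) * ∑ᶠ x, (η x - η (x + unitVec i)) ^ 2) :=
            Finset.sum_le_sum fun i _ => perI i
        _ = (1 + c) * Stmt9.dir φ + (1 + 1 / c) * Stmt9.dir η := by
            rw [Finset.sum_add_distrib, ← Finset.mul_sum, ← Finset.mul_sum]; rfl
    -- potential comparison
    have hpotψ : Stmt9.pot V ψ = Stmt9.pot V φ - Stmt9.pot V η := by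
      have h : Stmt9.pot V φ = Stmt9.pot V ψ + Stmt9.pot V η := by
        rw [Stmt9.pot, Stmt9.pot, Stmt9.pot,
          ← finsum_add_distrib (Stmt9.supp_le hψfin fun x hx => by simp [hx])
            (Stmt9.supp_le hηfin fun x hx => by simp [hx])]
        exact finsum_congr fun x => by rw [← hψη x]; ring
      linarith
    have hpotη : |Stmt9.pot V η| ≤ C * s := by
      have := Stmt9.pot_le hC hηfin; rwa [hnη] at this
    have hEψ : energy V ψ = Stmt9.dir ψ + Stmt9.pot V ψ := Stmt9.energy_decomp V ψ hψfin
    -- main chain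
    have m1 : (1 + c) * Stmt9.dir φ ≤ Stmt9.dir φ + c * (E₀ + ε + C) := by
      have h1 := mul_le_mul_of_nonneg_left hdφ hc.le
      have h2 : (1 + c) * Stmt9.dir φ = Stmt9.dir φ + c * Stmt9.dir φ := by ring
      linarith
    have m2 : (1 + 1 / c) * Stmt9.dir η ≤ (1 + 1 / c) * (4 * (d : ℝ) * s) :=
      mul_le_mul_of_nonneg_left hdη (by positivity)
    have hfin : energy V ψ ≤ (E₀ + ε) + c * (E₀ + ε + C) +
        (1 + 1 / c) * (4 * (d : ℝ) * s) + C * s := by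
      have habs := (abs_le.1 hpotη).1
      rw [hEψ, hpotψ]
      linarith
    -- normalized test function for EG
    set ψ' := fun x => Real.sqrt nψ⁻¹ * ψ x with hψ'def
    have hψ'fin : (Function.support ψ').Finite :=
      Stmt9.supp_le hψfin fun x hx => by simp [hψ'def, hx]
    have hsq : Real.sqrt nψ⁻¹ ^ 2 = nψ⁻¹ := Real.sq_sqrt (inv_nonneg.2 hnψpos.le)
    have hnψ' : norm2 ψ' = 1 := by
      rw [hψ'def, Stmt9.norm2_smul ψ _ hψfin, hsq, inv_mul_cancel₀ hnψpos.ne']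
    have hψ'Γ : ∀ x ∈ Γ, ψ' x = 0 := fun x hx => by simp [hψ'def, hψΓ x hx]
    have hGle : G ≤ energy V ψ' := by
      rw [hGdef, Stmt9.EG_eq]
      exact csInf_le
        (BddBelow.mono (Stmt9.EGSet_subset V Γ) ⟨-C, Stmt9.ESet_lb hC⟩)
        ⟨ψ', hψ'fin, hψ'Γ, hnψ', rfl⟩
    have henψ' : energy V ψ' = nψ⁻¹ * energy V ψ := by
      rw [hψ'def, Stmt9.energy_smul V ψ _ hψfin, hsq]
    have hGn : G * nψ ≤ energy V ψ := by
      have h1 : G ≤ nψ⁻¹ * energy V ψ := henψ' ▸ hGle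
      have h2 := mul_le_mul_of_nonneg_right h1 hnψpos.le
      have heq : nψ⁻¹ * energy V ψ * nψ = energy V ψ := by
        field_simp
      linarith
    -- final contradiction
    have b1 : c * (E₀ + ε + C) ≤ g / 2 := by
      have h1 : E₀ + ε + C ≤ M := by
        have := le_abs_self E₀
        simp only [hMdef]; linarith
      exact (mul_le_mul_of_nonneg_left h1 hc.le).trans_eq hcM
    have b2 : G * s ≤ |G| * s := mul_le_mul_of_nonneg_right (le_abs_self G) hs0
    have b3 : K * s ≤ K * (ε / t) := mul_le_mul_of_nonneg_left hst hK
    have b4 : K * (ε / t) = ε * (K / t) := by ring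
    have b5 : ε * (1 + K / t) = ε + ε * (K / t) := by ring
    have b6 : K * s = (1 + 1 / c) * (4 * (d : ℝ) * s) + C * s + |G| * s := by
      simp only [hKdef]; ring
    have b7 : G * nψ = G - G * s := by rw [hnψ]; ring
    have : g ≤ g / 2 + g / 4 := by
      have hfinal : G - G * s ≤ (E₀ + ε) + c * (E₀ + ε + C) +
          (1 + 1 / c) * (4 * (d : ℝ) * s) + C * s := by
        rw [← b7]; exact le_trans hGn hfin
      simp only [hgdef]
      linarith
    linarith
  · -- easy direction
    intro h
    have h1 := h 1 one_pos
    refine lt_of_lt_of_le h1 ?_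
    have hEGtdef : EGt V Γ 1 = sInf (Stmt9.ESet (fun x => V x + 1 * chi Γ x)) := rfl
    rw [Stmt9.EG_eq, hEGtdef]
    apply csInf_le_csInf
    · refine ⟨-(C + 1), Stmt9.ESet_lb fun x => ?_⟩
      have h1 := hC x
      have h2 := Stmt9.chi_nonneg Γ x
      have h3 := Stmt9.chi_le_one Γ x
      rw [abs_le] at h1 ⊢
      constructor <;> [nlinarith; nlinarith]
    · obtain ⟨x0, hx0⟩ := (Set.ne_univ_iff_exists_notMem Γ).mp hne
      refine ⟨_, (fun x : Zd d => if x = x0 then (1 : ℝ) else 0), ?_, ?_, ?_, rfl⟩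
      · apply Set.Finite.subset (Set.finite_singleton x0)
        intro x hx
        simp only [Function.mem_support, ne_eq, ite_eq_right_iff, not_forall] at hx
        simp [hx.1]
      · intro x hx
        have : x ≠ x0 := fun hxx => hx0 (hxx ▸ hx)
        simp [this]
      · rw [norm2, finsum_eq_single _ x0 (fun x hx => by simp [hx])]
        simp
    · rintro r ⟨φ, h1, h2, h3, h4⟩
      refine ⟨φ, h1, h3, ?_⟩
      rw [h4, Stmt9.energy_add V (fun x => 1 * chi Γ x) φ h1]
      have hz : Stmt9.pot (fun x => 1 * chi Γ x) φ = 0 := by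
        apply finsum_eq_zero_of_forall_eq_zero
        intro x
        by_cases hx : x ∈ Γ
        · simp [h2 x hx]
        · simp [Stmt9.chi_not_mem hx]
      rw [hz, add_zero]
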